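/- If u and v are two linearly independent solutions of the linear ODE x'' + Ω²(t) x = 0 with constant Wronskian W = u v' − v u' ≠ 0, and a, b, c are real constants with a c − b² = 1/W² and a, c > 0, then ρ(t) = √(a u(t)² + c v(t)² + 2 b u(t) v(t)) solves the Ermakov–Pinney equation ρ'' + Ω²(t) ρ = 1/ρ³ on any interval where a u² + c v² + 2 b u v > 0. -/

import Mathlib

/-- If `u, v` are linearly independent solutions of `x'' + Ω²(t) x = 0` with
constant nonzero Wronskian `W = u v' - v u'`, and `a c - b² = 1/W²` with
`a, c > 0`, then `ρ = √(a u² + c v² + 2 b u v)` solves the Ermakov–Pinney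
equation `ρ'' + Ω² ρ = 1/ρ³` on any open set where `a u² + c v² + 2buv > 0`. -/
theorem stmt9 (Ω2 u v u' v' u'' v'' : ℝ → ℝ) (W a b c : ℝ)
    (hΩcont : Continuous Ω2)
    (hu1 : ∀ t, HasDerivAt u (u' t) t) (hu2 : ∀ t, HasDerivAt u' (u'' t) t)
    (hv1 : ∀ t, HasDerivAt v (v' t) t) (hv2 : ∀ t, HasDerivAt v' (v'' t) t)
    (hueq : ∀ t, u'' t + Ω2 t * u t = 0)
    (hveq : ∀ t, v'' t + Ω2 t * v t = 0)
    (hW : ∀ t, u t * v' t - v t * u' t = W) (hW0 : W ≠ 0)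
    (habc : a * c - b ^ 2 = 1 / W ^ 2) (hapos : 0 < a) (hcpos : 0 < c)
    (s : Set ℝ) (hs : IsOpen s)
    (hpos : ∀ t ∈ s, 0 < a * u t ^ 2 + c * v t ^ 2 + 2 * b * u t * v t) :
    ∀ t ∈ s,
      deriv (deriv (fun t =>
          Real.sqrt (a * u t ^ 2 + c * v t ^ 2 + 2 * b * u t * v t))) t
        + Ω2 t * Real.sqrt (a * u t ^ 2 + c * v t ^ 2 + 2 * b * u t * v t)
        = 1 / (Real.sqrt (a * u t ^ 2 + c * v t ^ 2 + 2 * b * u t * v t)) ^ 3 := by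
  set Q : ℝ → ℝ := fun t => a * u t ^ 2 + c * v t ^ 2 + 2 * b * u t * v t with hQdef
  set D : ℝ → ℝ := fun t => 2 * a * u t * u' t + 2 * c * v t * v' t
      + 2 * b * (u' t * v t + u t * v' t) with hDdef
  have hQ : ∀ t, HasDerivAt Q (D t) t := by
    intro t
    have h := (((hu1 t).pow 2).const_mul a).add
      ((((hv1 t).pow 2).const_mul c).add
        ((((hu1 t).mul (hv1 t)).const_mul (2 * b))))
    convert h using 1
    · rfl
    · rfl
    · ext x; simp [hQdef]; ring
    · simp [hDdef]; ring
  have hD : ∀ t, HasDerivAt D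
      (2 * a * (u' t ^ 2 + u t * u'' t) + 2 * c * (v' t ^ 2 + v t * v'' t)
        + 2 * b * (u'' t * v t + 2 * u' t * v' t + u t * v'' t)) t := by
    intro t
    have h := ((((hu1 t).mul (hu2 t)).const_mul (2 * a))).add
      (((((hv1 t).mul (hv2 t)).const_mul (2 * c))).add
        ((((hu2 t).mul (hv1 t)).add ((hu1 t).mul (hv2 t))).const_mul (2 * b)))
    convert h using 1
    · rfl
    · rfl
    · ext x; simp [hDdef]; ring
    · ring
  intro t ht
  have hQpos : 0 < Q t := hpos t ht
  have hQne : Q t ≠ 0 := ne_of_gt hQpos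
  set S := Real.sqrt (Q t) with hSdef
  have hSpos : 0 < S := Real.sqrt_pos.mpr hQpos
  have hS2 : S ^ 2 = Q t := Real.sq_sqrt hQpos.le
  set g : ℝ → ℝ := fun x => D x / (2 * Real.sqrt (Q x)) with hgdef
  have hderiv1 : ∀ x ∈ s, HasDerivAt (fun y => Real.sqrt (Q y)) (g x) x := by
    intro x hx
    exact (hQ x).sqrt (ne_of_gt (hpos x hx))
  have hderivf : deriv (fun y => Real.sqrt (Q y)) =ᶠ[nhds t] g := by
    filter_upwards [hs.mem_nhds ht] with x hx
    exact (hderiv1 x hx).deriv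
  have hg : HasDerivAt g
      (((2 * a * (u' t ^ 2 + u t * u'' t) + 2 * c * (v' t ^ 2 + v t * v'' t)
        + 2 * b * (u'' t * v t + 2 * u' t * v' t + u t * v'' t)) * (2 * S)
        - D t * (2 * (D t / (2 * S)))) / (2 * S) ^ 2) t := by
    have hden : HasDerivAt (fun x => 2 * Real.sqrt (Q x)) (2 * (D t / (2 * S))) t :=
      ((hQ t).sqrt hQne).const_mul 2
    exact (hD t).div hden (mul_ne_zero two_ne_zero (ne_of_gt hSpos))
  have hkey : deriv (deriv (fun y => Real.sqrt (Q y))) t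
      = ((2 * a * (u' t ^ 2 + u t * u'' t) + 2 * c * (v' t ^ 2 + v t * v'' t)
        + 2 * b * (u'' t * v t + 2 * u' t * v' t + u t * v'' t)) * (2 * S)
        - D t * (2 * (D t / (2 * S)))) / (2 * S) ^ 2 := by
    rw [hderivf.deriv_eq]
    exact hg.deriv
  have hu'' : u'' t = -(Ω2 t * u t) := by linarith [hueq t]
  have hv'' : v'' t = -(Ω2 t * v t) := by linarith [hveq t]
  have habc' : (a * c - b ^ 2) * W ^ 2 = 1 := by
    rw [habc]; field_simp
  have hW' := hW t
  have hSne : S ≠ 0 := ne_of_gt hSpos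
  have hiden : 2 * (a * u t ^ 2 + c * v t ^ 2 + 2 * b * u t * v t)
        * (2 * a * (u' t ^ 2 + -(u t * (Ω2 t * u t)))
          + 2 * c * (v' t ^ 2 + -(v t * (Ω2 t * v t)))
          + 2 * b * (-(Ω2 t * u t * v t) + 2 * u' t * v' t + -(u t * (Ω2 t * v t))))
      - (2 * a * u t * u' t + 2 * c * v t * v' t
          + 2 * b * (u' t * v t + u t * v' t)) ^ 2
      + 4 * Ω2 t * (a * u t ^ 2 + c * v t ^ 2 + 2 * b * u t * v t) ^ 2 = 4 := by
    linear_combination (4 * (a * c - b ^ 2) * (u t * v' t - v t * u' t + W)) * hW'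
      + 4 * habc'
  have hS2' : S ^ 2 = a * u t ^ 2 + c * v t ^ 2 + 2 * b * u t * v t := hS2
  show deriv (deriv (fun y => Real.sqrt (Q y))) t + Ω2 t * S = 1 / S ^ 3
  rw [hkey, hu'', hv'']
  simp only [hDdef]
  field_simp
  linear_combination (1 / 4 : ℝ) * hiden
    + ((a * (u' t ^ 2 + -(u t ^ 2 * Ω2 t)) + c * (v' t ^ 2 + -(Ω2 t * v t ^ 2)) +
            b * (-(u t * Ω2 t * v t) + 2 * u' t * v' t + -(u t * Ω2 t * v t)))
          + Ω2 t * (S ^ 2 + (a * u t ^ 2 + c * v t ^ 2 + 2 * b * u t * v t))) * hS2'
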